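/- arXiv:0904.2689 — 2 statements merged into one kernel-verified Lean document; each statement's English description precedes it below -/
import Mathlib

section
/- Let ρ_sc be the semicircle density with parameter v > 0. Then for every z with Im z > 0, the Stieltjes transform ∫ ρ_sc(λ)/(λ - z) dλ equals the solution w(z) of v²w² + zw + 1 = 0 with Im w(z) > 0, namely w(z) = (-z + √(z² - 4v²))/(2v²) with the branch of the square root chosen so that Im w(z) > 0. -/
open MeasureTheory Complex intervalIntegral

section helpers

lemma aux_cosZ (n : ℤ) :
    ∫ θ in (0:ℝ)..Real.pi, Real.cos (n * θ) = if n = 0 then Real.pi else 0 := by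
  rcases eq_or_ne n 0 with h | h
  · simp [h]
  · rw [if_neg h]
    have hn : ((n:ℝ)) ≠ 0 := Int.cast_ne_zero.mpr h
    rw [intervalIntegral.integral_comp_mul_left Real.cos hn]
    simp [integral_cos, Real.sin_int_mul_pi]

lemma aux_cc (n : ℕ) :
    ∫ θ in (0:ℝ)..Real.pi, Real.cos (n * θ) * Real.cos (2 * θ)
      = if n = 2 then Real.pi / 2 else 0 := by
  have key : ∀ θ : ℝ, Real.cos (n * θ) * Real.cos (2 * θ)
      = (Real.cos ((((n:ℤ)+2):ℝ) * θ) + Real.cos ((((n:ℤ)-2):ℝ) * θ)) / 2 := by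
    intro θ
    rw [show ((((n:ℤ)+2):ℝ)) * θ = (n:ℝ) * θ + 2 * θ by push_cast; ring,
      show ((((n:ℤ)-2):ℝ)) * θ = (n:ℝ) * θ - 2 * θ by push_cast; ring,
      Real.cos_add, Real.cos_sub]
    ring
  rw [intervalIntegral.integral_congr (g := fun θ =>
      (Real.cos ((((n:ℤ)+2):ℝ) * θ) + Real.cos ((((n:ℤ)-2):ℝ) * θ)) / 2)
      (fun θ _ => key θ)]
  have h1 : IntervalIntegrable (fun θ : ℝ => Real.cos ((((n:ℤ)+2):ℝ) * θ)) volume 0 Real.pi :=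
    (Real.continuous_cos.comp (continuous_const.mul continuous_id)).intervalIntegrable _ _
  have h2 : IntervalIntegrable (fun θ : ℝ => Real.cos ((((n:ℤ)-2):ℝ) * θ)) volume 0 Real.pi :=
    (Real.continuous_cos.comp (continuous_const.mul continuous_id)).intervalIntegrable _ _
  have e1 := aux_cosZ ((n:ℤ)+2); have e2 := aux_cosZ ((n:ℤ)-2)
  push_cast at e1 e2
  push_cast
  rw [intervalIntegral.integral_div, intervalIntegral.integral_add (by push_cast at h1 ⊢; exact h1) (by push_cast at h2 ⊢; exact h2), e1, e2]
  have : ((n:ℤ)+2) ≠ 0 := by omega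
  rw [if_neg this]
  rcases eq_or_ne n 2 with h | h
  · subst h; norm_num
  · have : ((n:ℤ)-2) ≠ 0 := by omega
    rw [if_neg this, if_neg h]; norm_num

lemma aux_J (n : ℕ) :
    ∫ θ in (0:ℝ)..Real.pi, Real.cos (n * θ) * Real.sin θ ^ 2
      = if n = 0 then Real.pi / 2 else if n = 2 then -(Real.pi / 4) else 0 := by
  have key : ∀ θ : ℝ, Real.cos (n * θ) * Real.sin θ ^ 2
      = Real.cos ((((n:ℤ)):ℝ) * θ) / 2 - Real.cos ((n:ℝ) * θ) * Real.cos (2 * θ) / 2 := by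
    intro θ
    have h1 := Real.cos_two_mul θ
    have h2 := Real.sin_sq_add_cos_sq θ
    push_cast
    linear_combination Real.cos ((n:ℝ)*θ) * h2 + Real.cos ((n:ℝ)*θ)/2 * h1
  rw [intervalIntegral.integral_congr (g := fun θ =>
      Real.cos ((((n:ℤ)):ℝ) * θ) / 2 - Real.cos ((n:ℝ) * θ) * Real.cos (2 * θ) / 2)
      (fun θ _ => key θ)]
  have h1 : IntervalIntegrable (fun θ : ℝ => Real.cos ((((n:ℤ)):ℝ) * θ) / 2) volume 0 Real.pi :=
    ((Real.continuous_cos.comp (continuous_const.mul continuous_id)).div_const 2).intervalIntegrable _ _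
  have h2 : IntervalIntegrable (fun θ : ℝ => Real.cos ((n:ℝ) * θ) * Real.cos (2 * θ) / 2) volume 0 Real.pi :=
    (((Real.continuous_cos.comp (continuous_const.mul continuous_id)).mul
      (Real.continuous_cos.comp (continuous_const.mul continuous_id))).div_const 2).intervalIntegrable _ _
  have e1 := aux_cosZ (n:ℤ)
  push_cast at e1
  have ecc := aux_cc n
  push_cast at ecc ⊢
  rw [intervalIntegral.integral_sub (by push_cast at h1 ⊢; exact h1) (by push_cast at h2 ⊢; exact h2),
    intervalIntegral.integral_div, intervalIntegral.integral_div, e1, ecc]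
  rcases eq_or_ne n 0 with h | h
  · subst h; norm_num
  · rw [if_neg (by exact_mod_cast h), if_neg h]
    rcases eq_or_ne n 2 with h2' | h2'
    · subst h2'; rw [if_pos rfl, if_pos rfl]; ring
    · rw [if_neg h2', if_neg h2']; norm_num


lemma key_alg (A B S X u s : ℂ) (hA : A ≠ 0) (hB : B ≠ 0) (hX : X ≠ 0) (hs : s ≠ 0)
    (h1 : A * B = -u * X) (h2 : A + B - A * B = s) :
    S / X = (-u / s) * ((A⁻¹ + B⁻¹) * S - S) := by
  have hu : u * X ≠ 0 := by
    intro h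
    rw [show -u * X = -(u*X) by ring, h] at h1
    exact mul_ne_zero hA hB (by simpa using h1)
  have hu0 : u ≠ 0 := fun h => hu (by simp [h])
  have e1 : A⁻¹ + B⁻¹ - 1 = s / (A * B) := by
    rw [← h2]
    field_simp
    ring
  rw [show ((A⁻¹ + B⁻¹) * S - S) = (A⁻¹ + B⁻¹ - 1) * S by ring, e1, h1]
  rw [div_eq_iff hX]
  have hnu : -u ≠ 0 := neg_ne_zero.mpr hu0
  field_simp

end helpers

set_option maxHeartbeats 2000000 in
/-- The Stieltjes transform of the semicircle density equals the solution `w` of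
`v² w² + z w + 1 = 0` with `Im w > 0`, for `Im z > 0`. -/
theorem semicircle_stieltjes_transform_eq
    (v : ℝ) (hv : 0 < v) (ρ : ℝ → ℝ)
    (hρ : ∀ lam : ℝ, ρ lam =
      if |lam| ≤ 2 * v then (2 * Real.pi * v ^ 2)⁻¹ * Real.sqrt (4 * v ^ 2 - lam ^ 2) else 0)
    (z : ℂ) (hz : 0 < z.im) (w : ℂ)
    (hw : (v : ℂ) ^ 2 * w ^ 2 + z * w + 1 = 0) (hwim : 0 < w.im) :
    (∫ lam : ℝ, (ρ lam : ℂ) / ((lam : ℂ) - z)) = w := by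
  have hπ := Real.pi_pos
  have hv0 : (v:ℂ) ≠ 0 := by exact_mod_cast hv.ne'
  set q : ℂ := (v:ℂ) * w with hq_def
  have hw0 : w ≠ 0 := by
    intro h; rw [h] at hw; simp at hw
  have hq0 : q ≠ 0 := mul_ne_zero hv0 hw0
  set c : ℂ := z / (2*(v:ℂ)) with hc_def
  have hcim : 0 < c.im := by
    have h2v : (2*(v:ℂ)) = ((2*v:ℝ):ℂ) := by push_cast; ring
    rw [hc_def, h2v, div_eq_mul_inv, ← Complex.ofReal_inv]
    simp only [Complex.mul_im, Complex.ofReal_re, Complex.ofReal_im, mul_zero, add_zero,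
      Complex.mul_re, zero_mul]
    positivity
  have hquad : q^2 + 2*c*q + 1 = 0 := by
    rw [hq_def, hc_def]
    field_simp
    linear_combination hw
  have hqim : 0 < q.im := by
    rw [hq_def]
    simpa [Complex.mul_im] using mul_pos hv hwim
  have hnormq : ‖q‖ < 1 := by
    have hsum : q + q⁻¹ = -(2*c) := by
      field_simp
      linear_combination hquad
    have him := congrArg Complex.im hsum
    simp only [Complex.add_im, Complex.inv_im, Complex.neg_im, Complex.mul_im] at him
    have hs : 0 < Complex.normSq q := Complex.normSq_pos.mpr hq0
    have hs1 : Complex.normSq q < 1 := by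
      by_contra hle
      push_neg at hle
      have h1 : q.im / Complex.normSq q ≤ q.im := by
        rw [div_le_iff₀ hs]; nlinarith
      rw [neg_div] at him
      norm_num at him
      linarith
    have h2 : ‖q‖^2 < 1 := by
      rw [Complex.sq_norm]
      exact hs1
    nlinarith [norm_nonneg q]
  -- the two geometric building blocks
  set a : ℝ → ℂ := fun θ => q * Complex.exp (θ * Complex.I) with ha_def
  set b : ℝ → ℂ := fun θ => q * Complex.exp (-(θ * Complex.I)) with hb_def
  have hna : ∀ θ : ℝ, ‖a θ‖ < 1 := by
    intro θ
    rw [ha_def]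
    simp only [norm_mul, Complex.norm_exp_ofReal_mul_I, mul_one]
    exact hnormq
  have hnb : ∀ θ : ℝ, ‖b θ‖ < 1 := by
    intro θ
    rw [hb_def]
    simp only [norm_mul]
    have : ‖Complex.exp (-(↑θ * Complex.I))‖ = 1 := by
      rw [show -((θ:ℂ) * Complex.I) = ((-θ:ℝ):ℂ) * Complex.I by push_cast; ring]
      exact Complex.norm_exp_ofReal_mul_I _
    rw [this, mul_one]
    exact hnormq
  have h1a : ∀ θ : ℝ, (1:ℂ) - a θ ≠ 0 := by
    intro θ h
    have : (1:ℂ) = a θ := by linear_combination h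
    have h2 := congrArg norm this
    simp only [norm_one] at h2
    have hlt := hna θ
    rw [← h2] at hlt
    exact lt_irrefl _ hlt
  have h1b : ∀ θ : ℝ, (1:ℂ) - b θ ≠ 0 := by
    intro θ h
    have : (1:ℂ) = b θ := by linear_combination h
    have h2 := congrArg norm this
    simp only [norm_one] at h2
    have hlt := hnb θ
    rw [← h2] at hlt
    exact lt_irrefl _ hlt
  have hq2 : (1:ℂ) - q^2 ≠ 0 := by
    intro h
    have h' : (1:ℂ) = q^2 := by linear_combination h
    have := congrArg norm h'
    simp only [norm_one, norm_pow] at this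
    nlinarith [norm_nonneg q]
  have hab : ∀ θ : ℝ, a θ * b θ = q^2 := by
    intro θ
    rw [ha_def, hb_def]
    simp only
    rw [show q * Complex.exp (↑θ * Complex.I) * (q * Complex.exp (-(↑θ * Complex.I)))
        = q^2 * (Complex.exp (↑θ * Complex.I) * Complex.exp (-(↑θ * Complex.I))) by ring,
      ← Complex.exp_add]
    simp
  have habs : ∀ θ : ℝ, a θ + b θ = 2 * q * ((Real.cos θ : ℝ) : ℂ) := by
    intro θ
    rw [ha_def, hb_def]
    simp only
    have h2c := Complex.two_cos (x := (θ:ℂ))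
    rw [show -(θ:ℂ) * Complex.I = -((θ:ℂ) * Complex.I) by ring] at h2c
    rw [Complex.ofReal_cos]
    linear_combination (-q) * h2c
  have hdenc : ∀ θ : ℝ, ((Real.cos θ : ℝ) : ℂ) + c ≠ 0 := by
    intro θ h
    have := congrArg Complex.im h
    simp only [Complex.add_im, Complex.ofReal_im, Complex.zero_im, zero_add] at this
    linarith
  -- the product formula
  have hprod : ∀ θ : ℝ, (1 - a θ) * (1 - b θ) = -(2*q) * (((Real.cos θ : ℝ) : ℂ) + c) := by
    intro θ
    linear_combination hab θ - habs θ + hquad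
  -- pointwise series identity
  have hkey : ∀ θ : ℝ, ((Real.sin θ : ℝ) : ℂ)^2 / (((Real.cos θ : ℝ) : ℂ) + c)
      = (-(2*q) / (1-q^2)) *
        ((((1 - a θ)⁻¹ + (1 - b θ)⁻¹) * ((Real.sin θ : ℝ) : ℂ)^2) - ((Real.sin θ : ℝ) : ℂ)^2) := by
    intro θ
    exact key_alg (1 - a θ) (1 - b θ) _ _ (2*q) (1 - q^2) (h1a θ) (h1b θ) (hdenc θ) hq2
      (by rw [show -(2*q) * (((Real.cos θ : ℝ) : ℂ) + c) = -(2*q) * (((Real.cos θ : ℝ) : ℂ) + c) from rfl]; linear_combination hprod θ)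
      (by linear_combination -hab θ)
  -- the summand family
  set g : ℕ → ℝ → ℂ := fun k θ => (a θ^k + b θ^k) * ((Real.sin θ : ℝ) : ℂ)^2 with hg_def
  have hca : Continuous a := by
    exact continuous_const.mul (Complex.continuous_exp.comp
      (Complex.continuous_ofReal.mul continuous_const))
  have hcb : Continuous b := by
    exact continuous_const.mul (Complex.continuous_exp.comp
      (Complex.continuous_ofReal.mul continuous_const).neg)
  have hcsin : Continuous fun θ : ℝ => ((Real.sin θ : ℝ) : ℂ) :=
    Complex.continuous_ofReal.comp Real.continuous_sin
  have hg_cont : ∀ k, Continuous (g k) := fun k =>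
    ((hca.pow k).add (hcb.pow k)).mul (hcsin.pow 2)
  have hsummable : ∀ θ : ℝ, Summable (fun k : ℕ => g k θ) := fun θ =>
    ((summable_geometric_of_norm_lt_one (hna θ)).add
      (summable_geometric_of_norm_lt_one (hnb θ))).mul_right _
  have htsum : ∀ θ : ℝ, ∑' k : ℕ, g k θ
      = ((1 - a θ)⁻¹ + (1 - b θ)⁻¹) * ((Real.sin θ : ℝ) : ℂ)^2 := by
    intro θ
    rw [hg_def]
    simp only
    rw [tsum_mul_right, Summable.tsum_add (summable_geometric_of_norm_lt_one (hna θ))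
      (summable_geometric_of_norm_lt_one (hnb θ)),
      tsum_geometric_of_norm_lt_one (hna θ), tsum_geometric_of_norm_lt_one (hnb θ)]
  -- norm of a θ and b θ
  have hea : ∀ θ : ℝ, ‖a θ‖ = ‖q‖ := by
    intro θ
    rw [ha_def]
    simp [norm_mul, Complex.norm_exp_ofReal_mul_I]
  have heb : ∀ θ : ℝ, ‖b θ‖ = ‖q‖ := by
    intro θ
    rw [hb_def]
    simp only [norm_mul]
    rw [show -((θ:ℂ) * Complex.I) = ((-θ:ℝ):ℂ) * Complex.I by push_cast; ring,
      Complex.norm_exp_ofReal_mul_I, mul_one]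
  -- integrability and summability of integrals
  set μ : Measure ℝ := volume.restrict (Set.Ioc 0 Real.pi) with hμ_def
  have hμfin : IsFiniteMeasure μ := by
    constructor
    rw [hμ_def, Measure.restrict_apply MeasurableSet.univ, Set.univ_inter, Real.volume_Ioc]
    exact ENNReal.ofReal_lt_top
  have hInt : ∀ k, Integrable (g k) μ := fun k => (hg_cont k).integrableOn_Ioc
  have hgbound : ∀ k (θ : ℝ), ‖g k θ‖ ≤ 2 * ‖q‖^k := by
    intro k θ
    rw [hg_def]
    simp only [norm_mul, norm_pow]
    have h1 : ‖a θ^k + b θ^k‖ ≤ 2 * ‖q‖^k := by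
      calc ‖a θ^k + b θ^k‖ ≤ ‖a θ^k‖ + ‖b θ^k‖ := norm_add_le _ _
        _ = 2 * ‖q‖^k := by rw [norm_pow, norm_pow, hea, heb]; ring
    have h2 : ‖((Real.sin θ : ℝ) : ℂ)‖^2 ≤ 1 := by
      rw [Complex.norm_real, Real.norm_eq_abs]
      nlinarith [Real.abs_sin_le_one θ, abs_nonneg (Real.sin θ)]
    nlinarith [norm_nonneg (a θ^k + b θ^k), norm_nonneg ((Real.sin θ : ℝ):ℂ),
      pow_nonneg (norm_nonneg q) k]
  have hIntSum : Summable fun k : ℕ => ∫ θ, ‖g k θ‖ ∂μ := by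
    apply Summable.of_nonneg_of_le (fun k => integral_nonneg fun θ => norm_nonneg _)
      (fun k => ?_) (((summable_geometric_of_lt_one (norm_nonneg q) hnormq)).mul_left
        (Real.pi * 2))
    have hle : (∫ θ, ‖g k θ‖ ∂μ) ≤ ∫ _, 2 * ‖q‖^k ∂μ := by
      apply integral_mono (hInt k).norm (integrable_const _) (fun θ => hgbound k θ)
    rw [MeasureTheory.integral_const] at hle
    rw [hμ_def] at hle
    rw [measureReal_restrict_apply MeasurableSet.univ, Set.univ_inter, Real.volume_real_Ioc,
      max_eq_left (by linarith)] at hle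
    calc (∫ θ, ‖g k θ‖ ∂μ) ≤ (Real.pi - 0) • (2 * ‖q‖^k) := hle
      _ = Real.pi * 2 * ‖q‖^k := by simp [smul_eq_mul]; ring
  have hswap := MeasureTheory.integral_tsum_of_summable_integral_norm hInt hIntSum
  -- per-term integral evaluation
  have hg_eval : ∀ k : ℕ, (∫ θ, g k θ ∂μ)
      = 2 * q^k * (((if k = 0 then Real.pi/2 else if k = 2 then -(Real.pi/4) else 0 : ℝ)):ℂ) := by
    intro k
    have hpt : ∀ θ : ℝ, g k θ = 2*q^k * (((Real.cos (k*θ) * Real.sin θ^2 : ℝ)):ℂ) := by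
      intro θ
      have e1 : Complex.exp ((θ:ℂ)*Complex.I)^k = Complex.exp ((((k:ℝ)*θ:ℝ):ℂ) * Complex.I) := by
        rw [← Complex.exp_nat_mul]
        congr 1
        push_cast
        ring
      have e2 : Complex.exp (-((θ:ℂ)*Complex.I))^k = Complex.exp (-((((k:ℝ)*θ:ℝ):ℂ) * Complex.I)) := by
        rw [← Complex.exp_nat_mul]
        congr 1
        push_cast
        ring
      have h2c := Complex.two_cos (x := ((((k:ℝ)*θ:ℝ)):ℂ))
      rw [show -((((k:ℝ)*θ:ℝ)):ℂ) * Complex.I = -(((((k:ℝ)*θ:ℝ)):ℂ) * Complex.I) by ring] at h2c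
      rw [← Complex.ofReal_cos] at h2c
      rw [hg_def, ha_def, hb_def]
      simp only [mul_pow]
      rw [e1, e2]
      push_cast at h2c ⊢
      linear_combination (-(q^k) * (Complex.sin (θ:ℂ))^2) * h2c
    rw [hμ_def]
    rw [show (∫ θ in Set.Ioc 0 Real.pi, g k θ) = ∫ θ in (0:ℝ)..Real.pi, g k θ from
      (intervalIntegral.integral_of_le hπ.le).symm]
    rw [intervalIntegral.integral_congr (g := fun θ =>
      2*q^k * (((Real.cos (k*θ) * Real.sin θ^2 : ℝ)):ℂ)) (fun θ _ => hpt θ)]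
    rw [intervalIntegral.integral_const_mul, intervalIntegral.integral_ofReal, aux_J k]
  -- value of the sum of the integrals
  have htsumInt : ∑' k : ℕ, ∫ θ, g k θ ∂μ = ↑Real.pi - q^2 * ↑Real.pi/2 := by
    have hvanish : ∀ k ∉ ({0, 2} : Finset ℕ), (∫ θ, g k θ ∂μ) = 0 := by
      intro k hk
      rw [hg_eval k]
      simp only [Finset.mem_insert, Finset.mem_singleton] at hk
      push_neg at hk
      rw [if_neg hk.1, if_neg hk.2]
      simp
    rw [tsum_eq_sum hvanish, show ({0, 2} : Finset ℕ) = insert 0 {2} from rfl,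
      Finset.sum_insert (by decide), Finset.sum_singleton, hg_eval 0, hg_eval 2]
    norm_num
    push_cast
    ring
  -- integral of sin^2
  have hsin2 : (∫ θ, ((Real.sin θ : ℝ):ℂ)^2 ∂μ) = (((Real.pi/2 : ℝ)):ℂ) := by
    rw [hμ_def]
    rw [show (∫ θ in Set.Ioc 0 Real.pi, ((Real.sin θ : ℝ):ℂ)^2) =
      ∫ θ in (0:ℝ)..Real.pi, ((Real.sin θ : ℝ):ℂ)^2 from
      (intervalIntegral.integral_of_le hπ.le).symm]
    rw [intervalIntegral.integral_congr (g := fun θ => (((Real.sin θ^2 : ℝ)):ℂ))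
      (fun θ _ => by push_cast; ring)]
    rw [intervalIntegral.integral_ofReal, integral_sin_sq]
    norm_num
  -- integrability of the sum
  have hIntTsum : Integrable (fun θ => ∑' k : ℕ, g k θ) μ := by
    have hcont2 : Continuous fun θ : ℝ => ((1 - a θ)⁻¹ + (1 - b θ)⁻¹) * ((Real.sin θ : ℝ):ℂ)^2 :=
      (((continuous_const.sub hca).inv₀ h1a).add
        ((continuous_const.sub hcb).inv₀ h1b)).mul (hcsin.pow 2)
    exact (hcont2.integrableOn_Ioc).congr (ae_of_all _ fun θ => (htsum θ).symm)
  -- the central integral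
  have hT : (∫ θ, ((Real.sin θ : ℝ):ℂ)^2 / (((Real.cos θ : ℝ):ℂ) + c) ∂μ) = -(↑Real.pi) * q := by
    have step1 : (∫ θ, ((Real.sin θ : ℝ):ℂ)^2 / (((Real.cos θ : ℝ):ℂ) + c) ∂μ)
        = ∫ θ, (-(2*q)/(1-q^2)) * ((∑' k : ℕ, g k θ) - ((Real.sin θ : ℝ):ℂ)^2) ∂μ := by
      apply MeasureTheory.integral_congr_ae (ae_of_all _ fun θ => ?_)
      rw [hkey θ, htsum θ]
    rw [step1, MeasureTheory.integral_const_mul, MeasureTheory.integral_sub (g := fun θ => ((Real.sin θ : ℝ):ℂ)^2) hIntTsum (by exact (hcsin.pow 2).integrableOn_Ioc),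
      ← hswap, htsumInt, hsin2]
    push_cast
    rw [div_mul_eq_mul_div, div_eq_iff hq2]
    ring
  -- nonvanishing of lam - z
  have hlamz : ∀ lam : ℝ, ((lam:ℂ) - z) ≠ 0 := by
    intro lam h
    have := congrArg Complex.im h
    simp only [Complex.sub_im, Complex.ofReal_im, Complex.zero_im, zero_sub] at this
    linarith
  -- unconditional form of the density
  have hρ' : ∀ lam, ρ lam = (2*Real.pi*v^2)⁻¹ * Real.sqrt (4*v^2 - lam^2) := by
    intro lam
    rw [hρ lam]
    split_ifs with h
    · rfl
    · push_neg at h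
      rw [Real.sqrt_eq_zero_of_nonpos (by nlinarith [_root_.sq_abs lam, abs_nonneg lam]), mul_zero]
  -- reduce to an interval
  have hfull : (∫ lam : ℝ, (ρ lam : ℂ)/((lam:ℂ) - z))
      = ∫ lam in Set.Ioc (-(2*v)) (2*v), (ρ lam : ℂ)/((lam:ℂ)-z) := by
    refine (setIntegral_eq_integral_of_forall_compl_eq_zero fun lam hl => ?_).symm
    have h0 : ρ lam = 0 := by
      rw [hρ' lam]
      simp only [Set.mem_Ioc, not_and_or, not_lt, not_le] at hl
      have hneg : 4*v^2 - lam^2 ≤ 0 := by rcases hl with h|h <;> nlinarith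
      rw [Real.sqrt_eq_zero_of_nonpos hneg, mul_zero]
    rw [h0]
    simp
  -- substitution lam = -(2v) cos θ
  have hgcont : Continuous fun lam : ℝ =>
      ((((2*Real.pi*v^2)⁻¹ * Real.sqrt (4*v^2 - lam^2) : ℝ)):ℂ)/((lam:ℂ)-z) := by
    apply Continuous.div
    · exact Complex.continuous_ofReal.comp
        (continuous_const.mul (Real.continuous_sqrt.comp (continuous_const.sub (continuous_pow 2))))
    · exact Complex.continuous_ofReal.sub continuous_const
    · exact hlamz
  have hderiv : ∀ θ ∈ Set.uIcc (0:ℝ) Real.pi,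
      HasDerivAt (fun x => -(2*v) * Real.cos x) (2*v*Real.sin θ) θ := by
    intro θ _
    have h := (Real.hasDerivAt_cos θ).const_mul (-(2*v))
    rw [show 2*v*Real.sin θ = -(2*v) * -Real.sin θ by ring]
    exact h
  have hsub := intervalIntegral.integral_comp_smul_deriv hderiv
    ((continuous_const.mul Real.continuous_sin).continuousOn) hgcont
  rw [show -(2*v) * Real.cos 0 = -(2*v) by simp, show -(2*v) * Real.cos Real.pi = 2*v by simp]
    at hsub
  set C : ℂ := ((((2*Real.pi*v^2)⁻¹ : ℝ)):ℂ) * ((-(2*v):ℝ):ℂ) with hC_def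
  have hπ0c : ((Real.pi : ℝ):ℂ) ≠ 0 := by exact_mod_cast hπ.ne'
  have hpteq : ∀ θ ∈ Set.uIcc (0:ℝ) Real.pi,
      (2*v*Real.sin θ) • ((fun lam : ℝ =>
        ((((2*Real.pi*v^2)⁻¹ * Real.sqrt (4*v^2 - lam^2) : ℝ)):ℂ)/((lam:ℂ)-z)) ∘
        (fun x => -(2*v) * Real.cos x)) θ
      = C * (((Real.sin θ : ℝ):ℂ)^2 / (((Real.cos θ : ℝ):ℂ) + c)) := by
    intro θ hθ
    rw [Set.uIcc_of_le hπ.le] at hθ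
    have hsin : 0 ≤ Real.sin θ := Real.sin_nonneg_of_nonneg_of_le_pi hθ.1 hθ.2
    have hsq : Real.sqrt (4*v^2 - (-(2*v) * Real.cos θ)^2) = 2*v*Real.sin θ := by
      rw [show 4*v^2 - (-(2*v) * Real.cos θ)^2 = (2*v*Real.sin θ)^2 by
        nlinarith [Real.sin_sq_add_cos_sq θ]]
      exact Real.sqrt_sq (by positivity)
    have hd2 := hdenc θ
    have hXY : ((-(2*v) * Real.cos θ : ℝ):ℂ) - z = -(2*(v:ℂ)) * (((Real.cos θ : ℝ):ℂ) + c) := by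
      rw [hc_def]
      push_cast
      field_simp
      ring
    simp only [Function.comp]
    rw [hsq, Complex.real_smul, hXY, hC_def]
    have h2vD : -(2*(v:ℂ)) * (((Real.cos θ : ℝ):ℂ) + c) ≠ 0 :=
      mul_ne_zero (by simpa using hv0) hd2
    rw [← mul_div_assoc, ← mul_div_assoc, div_eq_div_iff h2vD hd2]
    push_cast
    ring
  -- put everything together
  rw [hfull, ← intervalIntegral.integral_of_le (by linarith : -(2*v) ≤ 2*v)]
  rw [intervalIntegral.integral_congr (g := fun lam : ℝ =>
    ((((2*Real.pi*v^2)⁻¹ * Real.sqrt (4*v^2 - lam^2) : ℝ)):ℂ)/((lam:ℂ)-z))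
    (fun lam _ => by rw [hρ' lam])]
  rw [← hsub]
  rw [intervalIntegral.integral_congr hpteq]
  rw [intervalIntegral.integral_const_mul]
  rw [intervalIntegral.integral_of_le hπ.le, ← hμ_def, hT]
  rw [hC_def, hq_def]
  push_cast
  field_simp
end

section
/- Let X be a real random variable with E|X|^{q+2} < ∞ and let F : ℝ → ℂ be a smooth function with bounded derivatives up to order q+1. Then E[X F(X)] = ∑_{r=0}^{q} (K_{r+1}/r!) E[F^{(r)}(X)] + ε_q, where K_r is the r-th cumulant of X and |ε_q| ≤ C_q · sup_u |F^{(q+1)}(u)| · E|X|^{q+2} for a constant C_q depending only on q. State and prove this for q = 1: E[X F(X)] = K₁E[F(X)] + K₂E[F'(X)] + ε₁ with |ε₁| ≤ C·sup|F''|·E|X|³. -/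
open MeasureTheory

section Aux
open ENNReal

open intervalIntegral in
lemma cexp_abs_int_helper (a x M : ℝ) (hM0 : 0 ≤ M) :
    abs (∫ t in a..x, M * abs (t - a)) = M / 2 * (x - a) ^ 2 := by
  rcases le_total a x with h | h
  · have : ∫ t in a..x, M * abs (t - a) = ∫ t in a..x, M * (t - a) := by
      apply intervalIntegral.integral_congr
      intro t ht
      rw [Set.uIcc_of_le h] at ht
      show M * |t - a| = M * (t - a)
      rw [abs_of_nonneg (by linarith [ht.1])]
    rw [this, intervalIntegral.integral_const_mul]
    have : (∫ t in a..x, (t - a)) = (x - a) ^ 2 / 2 := by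
      rw [intervalIntegral.integral_sub intervalIntegral.intervalIntegrable_id (intervalIntegrable_const),
        integral_id, intervalIntegral.integral_const, smul_eq_mul]
      ring
    rw [this, abs_of_nonneg (by positivity)]
    ring
  · have : ∫ t in a..x, M * abs (t - a) = ∫ t in a..x, M * (a - t) := by
      apply intervalIntegral.integral_congr
      intro t ht
      rw [Set.uIcc_of_ge h] at ht
      show M * |t - a| = M * (a - t)
      rw [abs_of_nonpos (by linarith [ht.2]), neg_sub]
    rw [this, intervalIntegral.integral_const_mul]
    have : (∫ t in a..x, (a - t)) = -((x - a) ^ 2 / 2) := by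
      rw [intervalIntegral.integral_sub intervalIntegrable_const intervalIntegral.intervalIntegrable_id,
        integral_id, intervalIntegral.integral_const, smul_eq_mul]
      ring
    rw [this, abs_of_nonpos (by nlinarith [sq_nonneg (x - a)])]
    ring

lemma cexp_deriv_lip (F : ℝ → ℂ) (hF : ContDiff ℝ 2 F) (M : ℝ)
    (hM : ∀ u : ℝ, ‖deriv (deriv F) u‖ ≤ M) (a x : ℝ) :
    ‖deriv F x - deriv F a‖ ≤ M * |x - a| := by
  have hd : Differentiable ℝ (deriv F) := by
    have := (contDiff_succ_iff_deriv (n := 1)).mp (by exact_mod_cast hF)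
    exact this.2.2.differentiable (by norm_num)
  have := Convex.norm_image_sub_le_of_norm_deriv_le (f := deriv F)
    (s := Set.univ) (fun u _ => hd u) (fun u _ => hM u) convex_univ
    (Set.mem_univ a) (Set.mem_univ x)
  simpa [Real.norm_eq_abs] using this

lemma cexp_taylor2 (F : ℝ → ℂ) (hF : ContDiff ℝ 2 F) (M : ℝ)
    (hM : ∀ u : ℝ, ‖deriv (deriv F) u‖ ≤ M) (a x : ℝ) :
    ‖F x - F a - (deriv F a) * (x - a)‖ ≤ M / 2 * (x - a) ^ 2 := by
  have hM0 : 0 ≤ M := le_trans (norm_nonneg _) (hM 0)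
  have hd : Differentiable ℝ F := hF.differentiable (by norm_num)
  have hg' : ∀ t : ℝ, HasDerivAt (fun t : ℝ => F t - F a - (deriv F a) * ((t : ℂ) - a))
      (deriv F t - deriv F a) t := by
    intro t
    have h1 : HasDerivAt F (deriv F t) t := (hd t).hasDerivAt
    have h2 : HasDerivAt (fun t : ℝ => (deriv F a) * ((t : ℂ) - a)) (deriv F a) t := by
      have : HasDerivAt (fun t : ℝ => ((t : ℂ) - a)) 1 t := by
        simpa using ((Complex.ofRealCLM.hasDerivAt (x := t)).sub_const (a : ℂ))
      simpa using this.const_mul (deriv F a)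
    exact (h1.sub_const (F a)).sub h2
  have hcont : Continuous fun t => deriv F t - deriv F a :=
    ((hF.continuous_deriv (by norm_num)).sub continuous_const)
  have key : (F x - F a - (deriv F a) * ((x : ℂ) - a))
      = ∫ t in a..x, (deriv F t - deriv F a) := by
    have := intervalIntegral.integral_eq_sub_of_hasDerivAt (fun t _ => hg' t)
      (hcont.intervalIntegrable a x)
    rw [this]; simp
  rw [key]
  calc ‖∫ t in a..x, (deriv F t - deriv F a)‖
      ≤ abs (∫ t in a..x, M * abs (t - a)) := by
        apply intervalIntegral.norm_integral_le_abs_of_norm_le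
        · exact Filter.Eventually.of_forall fun t => cexp_deriv_lip F hF M hM a t
        · exact (continuous_const.mul
            ((continuous_id.sub continuous_const).abs)).intervalIntegrable a x
    _ = M / 2 * (x - a) ^ 2 := cexp_abs_int_helper a x M hM0

variable {Ω : Type*} [MeasurableSpace Ω] {μ : Measure Ω} [IsProbabilityMeasure μ]

lemma cexp_lyap13 (X : Ω → ℝ) (hX3 : MemLp X 3 μ) :
    (∫ ω, |X ω| ∂μ) ≤ (∫ ω, |X ω| ^ 3 ∂μ) ^ ((1:ℝ)/3) := by
  have hpq : Real.HolderConjugate 3 (3/2) := Real.holderConjugate_iff.mpr ⟨by norm_num, by norm_num⟩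
  have hf : MemLp (fun ω => |X ω|) (ENNReal.ofReal 3) μ := by
    have : ENNReal.ofReal 3 = 3 := by norm_num [ENNReal.ofReal_ofNat]
    rw [this]; exact hX3.norm
  have hg : MemLp (fun _ : Ω => (1:ℝ)) (ENNReal.ofReal (3/2)) μ := memLp_const 1
  have := integral_mul_le_Lp_mul_Lq_of_nonneg hpq
    (Filter.Eventually.of_forall fun ω => abs_nonneg (X ω))
    (Filter.Eventually.of_forall fun _ => zero_le_one) hf hg
  simp only [mul_one, Real.one_rpow, integral_const, measure_univ, probReal_univ, ENNReal.toReal_one,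
    one_smul] at this
  refine this.trans (le_of_eq ?_)
  congr 1
  refine integral_congr_ae (Filter.Eventually.of_forall fun ω => ?_)
  show |X ω| ^ (3:ℝ) = |X ω| ^ (3:ℕ)
  rw [← Real.rpow_natCast |X ω| 3]
  norm_num

lemma cexp_lyap23 (X : Ω → ℝ) (hX3 : MemLp X 3 μ) :
    (∫ ω, X ω ^ 2 ∂μ) ≤ (∫ ω, |X ω| ^ 3 ∂μ) ^ ((2:ℝ)/3) := by
  have hpq : Real.HolderConjugate (3/2) 3 := Real.holderConjugate_iff.mpr ⟨by norm_num, by norm_num⟩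
  have hf : MemLp (fun ω => X ω ^ 2) (ENNReal.ofReal (3/2)) μ := by
    have h2 := hX3.norm_rpow_div 2
    have he : (3 : ℝ≥0∞) / 2 = ENNReal.ofReal (3/2) := by
      rw [ENNReal.ofReal_div_of_pos (by norm_num)]
      norm_num [ENNReal.ofReal_ofNat]
    rw [← he]
    have : (fun ω => X ω ^ 2) = fun ω => ‖X ω‖ ^ ((2:ℝ≥0∞).toReal) := by
      funext ω
      rw [ENNReal.toReal_ofNat, Real.norm_eq_abs, Real.rpow_two, sq_abs]
    rw [this]
    exact h2
  have hg : MemLp (fun _ : Ω => (1:ℝ)) (ENNReal.ofReal 3) μ := memLp_const 1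
  have := integral_mul_le_Lp_mul_Lq_of_nonneg hpq
    (Filter.Eventually.of_forall fun ω => sq_nonneg (X ω))
    (Filter.Eventually.of_forall fun _ => zero_le_one) hf hg
  simp only [mul_one, Real.one_rpow, integral_const, measure_univ, probReal_univ, ENNReal.toReal_one,
    one_smul] at this
  exact this.trans (le_of_eq (by
    have heq : (∫ ω, (X ω ^ 2) ^ ((3:ℝ)/2) ∂μ) = ∫ ω, |X ω| ^ 3 ∂μ := by
      refine integral_congr_ae (Filter.Eventually.of_forall fun ω => ?_)
      show (X ω ^ 2) ^ ((3:ℝ)/2) = |X ω| ^ (3:ℕ)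
      rw [show X ω ^ 2 = |X ω| ^ 2 by rw [sq_abs], ← Real.rpow_natCast |X ω| 2,
        ← Real.rpow_mul (abs_nonneg _), ← Real.rpow_natCast |X ω| 3]
      norm_num
    rw [heq]
    norm_num))

lemma cexp_int_abs_cube (X : Ω → ℝ) (hX3 : MemLp X 3 μ) :
    Integrable (fun ω => |X ω| ^ 3) μ := by
  have := hX3.integrable_norm_rpow (by norm_num) (by norm_num)
  refine this.congr (Filter.Eventually.of_forall fun ω => ?_)
  show ‖X ω‖ ^ ((3:ℝ≥0∞).toReal) = |X ω| ^ (3:ℕ)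
  rw [ENNReal.toReal_ofNat, Real.norm_eq_abs, ← Real.rpow_natCast |X ω| 3]
  norm_num

end Aux

set_option maxHeartbeats 1000000 in
/-- The cumulant expansion (Stein-type identity with remainder) for `q = 1`:
`E[X F(X)] = K₁ E[F(X)] + K₂ E[F'(X)] + ε₁` with
`|ε₁| ≤ C · sup|F''| · E|X|³` for a universal constant `C`. -/
theorem cumulant_expansion_q_one
    {Ω : Type*} [MeasurableSpace Ω] (μ : Measure Ω) [IsProbabilityMeasure μ] :
    ∃ C : ℝ, 0 < C ∧
      ∀ (X : Ω → ℝ), Measurable X → MemLp X 3 μ →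
      ∀ (F : ℝ → ℂ), ContDiff ℝ 2 F →
      (∀ k : ℕ, k ≤ 2 → ∃ B : ℝ, ∀ u : ℝ, ‖iteratedDeriv k F u‖ ≤ B) →
      ∀ M : ℝ, (∀ u : ℝ, ‖iteratedDeriv 2 F u‖ ≤ M) →
      ‖(∫ ω, (X ω : ℂ) * F (X ω) ∂μ)
          - (((∫ ω, X ω ∂μ : ℝ) : ℂ) * (∫ ω, F (X ω) ∂μ)
            + (((∫ ω, (X ω) ^ 2 ∂μ) - (∫ ω, X ω ∂μ) ^ 2 : ℝ) : ℂ)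
                * (∫ ω, deriv F (X ω) ∂μ))‖
        ≤ C * M * ∫ ω, |X ω| ^ 3 ∂μ := by
  refine ⟨8, by norm_num, ?_⟩
  intro X hXm hX3 F hF hBs M hM
  have hM0 : 0 ≤ M := le_trans (norm_nonneg _) (hM 0)
  have hM' : ∀ u : ℝ, ‖deriv (deriv F) u‖ ≤ M := by
    intro u
    have := hM u
    rwa [show (2:ℕ) = 1 + 1 from rfl, iteratedDeriv_succ, iteratedDeriv_one] at this
  obtain ⟨B0, hB0'⟩ := hBs 0 (by norm_num)
  have hB0 : ∀ u, ‖F u‖ ≤ B0 := by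
    intro u; have := hB0' u; rwa [iteratedDeriv_zero] at this
  obtain ⟨B1, hB1'⟩ := hBs 1 (by norm_num)
  have hB1 : ∀ u, ‖deriv F u‖ ≤ B1 := by
    intro u; have := hB1' u; rwa [iteratedDeriv_one] at this
  set a : ℝ := ∫ ω, X ω ∂μ with ha
  set m2 : ℝ := ∫ ω, X ω ^ 2 ∂μ with hm2
  set T : ℝ := ∫ ω, |X ω| ^ 3 ∂μ with hT
  set c0 : ℂ := F a with hc0
  set c1 : ℂ := deriv F a with hc1
  have hT0 : 0 ≤ T := integral_nonneg fun ω => by positivity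
  -- integrability facts
  have hX1 : Integrable X μ := hX3.integrable (by norm_num)
  have hX2i : Integrable (fun ω => X ω ^ 2) μ :=
    (hX3.mono_exponent (by norm_num)).integrable_sq
  have hXabs : Integrable (fun ω => |X ω|) μ := hX1.abs
  have hT3 : Integrable (fun ω => |X ω| ^ 3) μ := cexp_int_abs_cube X hX3
  set Y : Ω → ℝ := fun ω => X ω - a with hYdef
  have hY3 : MemLp Y 3 μ := hX3.sub (memLp_const a)
  have hY1 : Integrable Y μ := hX1.sub (integrable_const a)
  have hYabs : Integrable (fun ω => |Y ω|) μ := hY1.abs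
  have hY2i : Integrable (fun ω => Y ω ^ 2) μ :=
    (hY3.mono_exponent (by norm_num)).integrable_sq
  have hYabs3 : Integrable (fun ω => |Y ω| ^ 3) μ := cexp_int_abs_cube Y hY3
  have hcF : Continuous F := hF.continuous
  have hcF' : Continuous (deriv F) := hF.continuous_deriv (by norm_num)
  have hmFX : AEStronglyMeasurable (fun ω => F (X ω)) μ :=
    (hcF.measurable.comp hXm).aestronglyMeasurable
  have hFX : Integrable (fun ω => F (X ω)) μ :=
    ⟨hmFX, HasFiniteIntegral.of_bounded (C := B0)
      (Filter.Eventually.of_forall fun ω => hB0 (X ω))⟩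
  have hF'X : Integrable (fun ω => deriv F (X ω)) μ :=
    ⟨(hcF'.measurable.comp hXm).aestronglyMeasurable,
      HasFiniteIntegral.of_bounded (C := B1)
        (Filter.Eventually.of_forall fun ω => hB1 (X ω))⟩
  have hmXC : AEStronglyMeasurable (fun ω => (X ω : ℂ)) μ :=
    (Complex.measurable_ofReal.comp hXm).aestronglyMeasurable
  have hXFX : Integrable (fun ω => (X ω : ℂ) * F (X ω)) μ := by
    refine Integrable.mono' (hXabs.const_mul B0) (hmXC.mul hmFX)
      (Filter.Eventually.of_forall fun ω => ?_)
    rw [norm_mul, Complex.norm_real, Real.norm_eq_abs]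
    calc |X ω| * ‖F (X ω)‖ ≤ |X ω| * B0 :=
          mul_le_mul_of_nonneg_left (hB0 _) (abs_nonneg _)
      _ = B0 * |X ω| := mul_comm _ _
  set R2 : Ω → ℂ := fun ω => F (X ω) - c0 - c1 * ((X ω : ℂ) - (a : ℂ)) with hR2def
  set R1 : Ω → ℂ := fun ω => deriv F (X ω) - c1 with hR1def
  have hR2b : ∀ ω, ‖R2 ω‖ ≤ M / 2 * Y ω ^ 2 := fun ω => cexp_taylor2 F hF M hM' a (X ω)
  have hR1b : ∀ ω, ‖R1 ω‖ ≤ M * |Y ω| := fun ω => cexp_deriv_lip F hF M hM' a (X ω)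
  have hR1i : Integrable R1 μ := hF'X.sub (integrable_const c1)
  have hR2i : Integrable R2 μ :=
    (hFX.sub (integrable_const c0)).sub
      ((hX1.ofReal.sub (integrable_const ((a : ℝ) : ℂ))).const_mul c1)
  have hYR2i : Integrable (fun ω => ((Y ω : ℝ) : ℂ) * R2 ω) μ := by
    refine Integrable.mono' (hYabs3.const_mul (M / 2))
      (hY1.ofReal.aestronglyMeasurable.mul hR2i.aestronglyMeasurable)
      (Filter.Eventually.of_forall fun ω => ?_)
    rw [norm_mul, Complex.norm_real, Real.norm_eq_abs]
    calc |Y ω| * ‖R2 ω‖ ≤ |Y ω| * (M / 2 * Y ω ^ 2) :=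
          mul_le_mul_of_nonneg_left (hR2b ω) (abs_nonneg _)
      _ = M / 2 * |Y ω| ^ 3 := by
          rw [← sq_abs (Y ω)]; ring
  -- integral identities
  have hintY2 : (∫ ω, Y ω ^ 2 ∂μ) = m2 - a ^ 2 := by
    have hexp : (fun ω => Y ω ^ 2) = fun ω => X ω ^ 2 - 2 * a * X ω + a ^ 2 :=
      funext fun ω => by simp only [hYdef]; ring
    have j1 : Integrable (fun ω => 2 * a * X ω) μ := hX1.const_mul (2 * a)
    have j2 : Integrable (fun ω => X ω ^ 2 - 2 * a * X ω) μ := hX2i.sub j1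
    rw [hexp, integral_add j2 (integrable_const _),
      integral_sub hX2i j1, integral_const_mul, integral_const,
      probReal_univ, one_smul, ← ha, ← hm2]
    ring
  have eq3 : (∫ ω, deriv F (X ω) ∂μ) = c1 + ∫ ω, R1 ω ∂μ := by
    rw [hR1def, integral_sub hF'X (integrable_const c1), integral_const, probReal_univ,
      one_smul]
    ring
  have expand : (fun ω => ((Y ω : ℝ) : ℂ) * R2 ω)
      = fun ω => (X ω : ℂ) * F (X ω) - (a : ℂ) * F (X ω)
          - c0 * ((X ω : ℂ) - (a : ℂ)) - c1 * ((Y ω ^ 2 : ℝ) : ℂ) := by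
    funext ω
    simp only [hR2def, hYdef]
    push_cast
    ring
  have eq1 : (∫ ω, ((Y ω : ℝ) : ℂ) * R2 ω ∂μ)
      = (∫ ω, (X ω : ℂ) * F (X ω) ∂μ) - (a : ℂ) * (∫ ω, F (X ω) ∂μ)
        - c1 * ((m2 - a ^ 2 : ℝ) : ℂ) := by
    have i0 : Integrable (fun ω => (a : ℂ) * F (X ω)) μ := hFX.const_mul _
    have i1 : Integrable (fun ω => (X ω : ℂ) * F (X ω) - (a : ℂ) * F (X ω)) μ := hXFX.sub i0
    have i2 : Integrable (fun ω => (X ω : ℂ) - (a : ℂ)) μ :=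
      hX1.ofReal.sub (integrable_const _)
    have i3 : Integrable (fun ω => c0 * ((X ω : ℂ) - (a : ℂ))) μ := i2.const_mul c0
    have i4 : Integrable (fun ω => (X ω : ℂ) * F (X ω) - (a : ℂ) * F (X ω)
        - c0 * ((X ω : ℂ) - (a : ℂ))) μ := i1.sub i3
    have i5 : Integrable (fun ω => ((Y ω ^ 2 : ℝ) : ℂ)) μ := hY2i.ofReal
    have i6 : Integrable (fun ω => c1 * ((Y ω ^ 2 : ℝ) : ℂ)) μ := i5.const_mul c1
    have iX : Integrable (fun ω => ((X ω : ℝ) : ℂ)) μ := hX1.ofReal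
    have hXc : (∫ ω, ((X ω : ℝ) : ℂ) ∂μ) = ((a : ℝ) : ℂ) := by
      rw [ha]; exact integral_ofReal
    have hY2c : (∫ ω, ((Y ω ^ 2 : ℝ) : ℂ) ∂μ) = ((m2 - a ^ 2 : ℝ) : ℂ) := by
      rw [← hintY2]; exact integral_ofReal
    rw [expand, integral_sub i4 i6, integral_sub i1 i3, integral_sub hXFX i0,
      integral_const_mul, integral_const_mul, integral_const_mul,
      integral_sub iX (integrable_const _), hXc, hY2c,
      integral_const, probReal_univ, one_smul]
    push_cast
    ring
  have key : (∫ ω, (X ω : ℂ) * F (X ω) ∂μ)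
        - (((a : ℝ) : ℂ) * (∫ ω, F (X ω) ∂μ)
          + ((m2 - a ^ 2 : ℝ) : ℂ) * (∫ ω, deriv F (X ω) ∂μ))
      = (∫ ω, ((Y ω : ℝ) : ℂ) * R2 ω ∂μ) - ((m2 - a ^ 2 : ℝ) : ℂ) * (∫ ω, R1 ω ∂μ) := by
    rw [eq1, eq3]
    push_cast
    ring
  rw [key]
  -- norm bounds
  have n1 : ‖∫ ω, ((Y ω : ℝ) : ℂ) * R2 ω ∂μ‖ ≤ M / 2 * ∫ ω, |Y ω| ^ 3 ∂μ := by
    have := norm_integral_le_of_norm_le (hYabs3.const_mul (M / 2))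
      (Filter.Eventually.of_forall fun ω => by
        show ‖((Y ω : ℝ) : ℂ) * R2 ω‖ ≤ M / 2 * |Y ω| ^ 3
        rw [norm_mul, Complex.norm_real, Real.norm_eq_abs]
        calc |Y ω| * ‖R2 ω‖ ≤ |Y ω| * (M / 2 * Y ω ^ 2) :=
              mul_le_mul_of_nonneg_left (hR2b ω) (abs_nonneg _)
          _ = M / 2 * |Y ω| ^ 3 := by rw [← sq_abs (Y ω)]; ring)
    rwa [integral_const_mul] at this
  have n2 : ‖∫ ω, R1 ω ∂μ‖ ≤ M * ∫ ω, |Y ω| ∂μ := by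
    have := norm_integral_le_of_norm_le (hYabs.const_mul M)
      (Filter.Eventually.of_forall fun ω => hR1b ω)
    rwa [integral_const_mul] at this
  -- Lyapunov bounds
  have hL1 : (∫ ω, |X ω| ∂μ) ≤ T ^ ((1:ℝ)/3) := cexp_lyap13 X hX3
  have hL10 : 0 ≤ ∫ ω, |X ω| ∂μ := integral_nonneg fun ω => abs_nonneg _
  have hm2T : m2 ≤ T ^ ((2:ℝ)/3) := cexp_lyap23 X hX3
  have hm20 : 0 ≤ m2 := integral_nonneg fun ω => sq_nonneg _
  have haL : |a| ≤ ∫ ω, |X ω| ∂μ := by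
    rw [ha]
    exact (norm_integral_le_integral_norm X).trans_eq
      (integral_congr_ae (Filter.Eventually.of_forall fun ω => Real.norm_eq_abs _))
  have haT : |a| ≤ T ^ ((1:ℝ)/3) := haL.trans hL1
  have hcube : (T ^ ((1:ℝ)/3)) ^ (3:ℕ) = T := by
    rw [← Real.rpow_natCast (T ^ ((1:ℝ)/3)) 3, ← Real.rpow_mul hT0]
    norm_num
  have hsq : (T ^ ((1:ℝ)/3)) ^ (2:ℕ) = T ^ ((2:ℝ)/3) := by
    rw [← Real.rpow_natCast (T ^ ((1:ℝ)/3)) 2, ← Real.rpow_mul hT0]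
    norm_num
  have hprod : T ^ ((2:ℝ)/3) * T ^ ((1:ℝ)/3) = T := by
    rw [← Real.rpow_add_of_nonneg hT0 (by norm_num) (by norm_num)]
    norm_num
  have hKb : |m2 - a ^ 2| ≤ 2 * T ^ ((2:ℝ)/3) := by
    have h1 : a ^ 2 ≤ T ^ ((2:ℝ)/3) := by
      rw [← hsq, ← sq_abs a]
      exact pow_le_pow_left₀ (abs_nonneg a) haT 2
    rw [abs_sub_le_iff]
    constructor <;> nlinarith [sq_nonneg a]
  have hYL1 : (∫ ω, |Y ω| ∂μ) ≤ 2 * T ^ ((1:ℝ)/3) := by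
    have hpt : ∀ ω, |Y ω| ≤ |X ω| + |a| := fun ω => abs_sub (X ω) a
    have iadd : Integrable (fun ω => |X ω| + |a|) μ := hXabs.add (integrable_const _)
    have := integral_mono hYabs iadd hpt
    rw [integral_add hXabs (integrable_const _), integral_const, probReal_univ,
      one_smul] at this
    calc (∫ ω, |Y ω| ∂μ) ≤ (∫ ω, |X ω| ∂μ) + |a| := this
      _ ≤ T ^ ((1:ℝ)/3) + T ^ ((1:ℝ)/3) := add_le_add hL1 haT
      _ = 2 * T ^ ((1:ℝ)/3) := by ring
  have hYL3 : (∫ ω, |Y ω| ^ 3 ∂μ) ≤ 8 * T := by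
    have hpt : ∀ ω, |Y ω| ^ 3 ≤ 4 * (|X ω| ^ 3 + |a| ^ 3) := by
      intro ω
      have h1 : |Y ω| ≤ |X ω| + |a| := abs_sub (X ω) a
      have h2 : |Y ω| ^ 3 ≤ (|X ω| + |a|) ^ 3 :=
        pow_le_pow_left₀ (abs_nonneg _) h1 3
      have h3 : (|X ω| + |a|) ^ 3 ≤ 4 * (|X ω| ^ 3 + |a| ^ 3) := by
        nlinarith [mul_nonneg (add_nonneg (abs_nonneg (X ω)) (abs_nonneg a))
          (sq_nonneg (|X ω| - |a|)), abs_nonneg (X ω), abs_nonneg a]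
      linarith
    have i7 : Integrable (fun ω => |X ω| ^ 3 + |a| ^ 3) μ := hT3.add (integrable_const _)
    have i8 : Integrable (fun ω => 4 * (|X ω| ^ 3 + |a| ^ 3)) μ := i7.const_mul 4
    have := integral_mono hYabs3 i8 hpt
    rw [integral_const_mul, integral_add hT3 (integrable_const _), integral_const,
      probReal_univ, one_smul, ← hT] at this
    have ha3 : |a| ^ 3 ≤ T := by
      calc |a| ^ 3 ≤ (T ^ ((1:ℝ)/3)) ^ 3 := pow_le_pow_left₀ (abs_nonneg a) haT 3
        _ = T := hcube
    linarith
  -- final estimate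
  calc ‖(∫ ω, ((Y ω : ℝ) : ℂ) * R2 ω ∂μ) - ((m2 - a ^ 2 : ℝ) : ℂ) * (∫ ω, R1 ω ∂μ)‖
      ≤ ‖∫ ω, ((Y ω : ℝ) : ℂ) * R2 ω ∂μ‖ + ‖((m2 - a ^ 2 : ℝ) : ℂ) * (∫ ω, R1 ω ∂μ)‖ :=
        norm_sub_le _ _
    _ = ‖∫ ω, ((Y ω : ℝ) : ℂ) * R2 ω ∂μ‖ + |m2 - a ^ 2| * ‖∫ ω, R1 ω ∂μ‖ := by
        rw [norm_mul, Complex.norm_real, Real.norm_eq_abs]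
    _ ≤ M / 2 * (8 * T) + (2 * T ^ ((2:ℝ)/3)) * (M * (2 * T ^ ((1:ℝ)/3))) := by
        refine add_le_add (n1.trans (by nlinarith)) ?_
        refine mul_le_mul hKb (n2.trans ?_) (norm_nonneg _) (by positivity)
        exact mul_le_mul_of_nonneg_left hYL1 hM0
    _ = 4 * M * T + 4 * M * (T ^ ((2:ℝ)/3) * T ^ ((1:ℝ)/3)) := by ring
    _ = 8 * M * T := by rw [hprod]; ring
end
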